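/- arXiv:2303.16078 — 2 statements merged into one kernel-verified Lean document; each statement's English description precedes it below -/
import Mathlib

section
/- Suppose two cameras with centers C¹, C² observe affinely independent 3D points X_i, X_j, X_k, with image projections x_i¹, x_j¹, x_k¹ in camera 1 and x_i², x_j², x_k² in camera 2 (all with positive depths). Let m¹ be the centroid of x_i¹, x_j¹, x_k¹ and let E be an essential (fundamental) matrix satisfying (x_l²)ᵀ E x_l¹ = 0 for all l ∈ {i,j,k} and consistent with the two camera poses. Then the epipolar line E m¹ in the second image intersects the closed triangle with vertices x_i², x_j², x_k²; i.e., there exists a point p in the convex hull of {x_i², x_j², x_k²} with pᵀ E m¹ = 0. -/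
open Matrix

lemma mem_hull3' {V : Type*} [AddCommGroup V] [Module ℝ V] (a b c : V) {l1 l2 l3 : ℝ}
    (h1 : 0 ≤ l1) (h2 : 0 ≤ l2) (h3 : 0 ≤ l3) (hs : l1 + l2 + l3 = 1) :
    l1 • a + l2 • b + l3 • c ∈ convexHull ℝ ({a, b, c} : Set V) := by
  have := (convex_convexHull ℝ ({a, b, c} : Set V)).sum_mem
    (t := (Finset.univ : Finset (Fin 3))) (w := ![l1, l2, l3]) (z := ![a, b, c])
    (by intro i _; fin_cases i <;> simpa)
    (by simp [Fin.sum_univ_three, hs])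
    (by intro i _; fin_cases i <;> simp [subset_convexHull ℝ ({a,b,c}:Set V)] <;>
        exact subset_convexHull ℝ _ (by simp))
  simpa [Fin.sum_univ_three] using this

open Matrix in
/-- The epipolar line of the centroid `m¹` intersects the closed triangle of the
projections in the second image. -/
theorem stmt_2
    (R : Matrix (Fin 3) (Fin 3) ℝ) (t : Fin 3 → ℝ)
    (hR : R.transpose * R = 1 ∧ R.det = 1)
    (Xi Xj Xk : Fin 3 → ℝ)
    (hdi : 0 < Xi 2) (hdj : 0 < Xj 2) (hdk : 0 < Xk 2)
    (hdi2 : 0 < (R.mulVec Xi + t) 2) (hdj2 : 0 < (R.mulVec Xj + t) 2)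
    (hdk2 : 0 < (R.mulVec Xk + t) 2)
    (E : Matrix (Fin 3) (Fin 3) ℝ)
    (hE : E = !![0, -t 2, t 1; t 2, 0, -t 0; -t 1, t 0, 0] * R)
    (m1 : Fin 3 → ℝ)
    (hm1 : m1 = (1/3 : ℝ) • ((Xi 2)⁻¹ • Xi + (Xj 2)⁻¹ • Xj + (Xk 2)⁻¹ • Xk)) :
    ∃ p ∈ convexHull ℝ {((R.mulVec Xi + t) 2)⁻¹ • (R.mulVec Xi + t),
                        ((R.mulVec Xj + t) 2)⁻¹ • (R.mulVec Xj + t),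
                        ((R.mulVec Xk + t) 2)⁻¹ • (R.mulVec Xk + t)},
      p ⬝ᵥ E.mulVec m1 = 0 := by
  set ui := R.mulVec Xi + t with hui
  set uj := R.mulVec Xj + t with huj
  set uk := R.mulVec Xk + t with huk
  set T := ui 2 / Xi 2 + uj 2 / Xj 2 + uk 2 / Xk 2 with hT
  have hTpos : 0 < T := by
    rw [hT]
    have := div_pos hdi2 hdi
    have := div_pos hdj2 hdj
    have := div_pos hdk2 hdk
    linarith
  refine ⟨(ui 2 / Xi 2 / T) • ((ui 2)⁻¹ • ui) + (uj 2 / Xj 2 / T) • ((uj 2)⁻¹ • uj)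
      + (uk 2 / Xk 2 / T) • ((uk 2)⁻¹ • uk), ?_, ?_⟩
  · exact mem_hull3' _ _ _
      (div_nonneg (div_nonneg hdi2.le hdi.le) hTpos.le)
      (div_nonneg (div_nonneg hdj2.le hdj.le) hTpos.le)
      (div_nonneg (div_nonneg hdk2.le hdk.le) hTpos.le)
      (by rw [← add_div, ← add_div, ← hT, div_self hTpos.ne'])
  · have c1 : ui 2 / Xi 2 / T * (ui 2)⁻¹ = T⁻¹ * (Xi 2)⁻¹ := by
      field_simp
    have c2 : uj 2 / Xj 2 / T * (uj 2)⁻¹ = T⁻¹ * (Xj 2)⁻¹ := by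
      field_simp
    have c3 : uk 2 / Xk 2 / T * (uk 2)⁻¹ = T⁻¹ * (Xk 2)⁻¹ := by
      field_simp
    have hp : (ui 2 / Xi 2 / T) • ((ui 2)⁻¹ • ui) + (uj 2 / Xj 2 / T) • ((uj 2)⁻¹ • uj)
        + (uk 2 / Xk 2 / T) • ((uk 2)⁻¹ • uk)
        = T⁻¹ • ((Xi 2)⁻¹ • ui + (Xj 2)⁻¹ • uj + (Xk 2)⁻¹ • uk) := by
      simp only [smul_smul, smul_add]
      rw [c1, c2, c3]
    rw [hp, smul_dotProduct]
    have key : ((Xi 2)⁻¹ • ui + (Xj 2)⁻¹ • uj + (Xk 2)⁻¹ • uk) ⬝ᵥ E.mulVec m1 = 0 := by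
      subst hE hm1
      rw [hui, huj, huk]
      simp only [dotProduct, Matrix.mulVec, Matrix.mul_apply, Fin.sum_univ_three,
        Pi.add_apply, Pi.smul_apply, smul_eq_mul, Matrix.cons_val_zero, Matrix.cons_val_one,
        Matrix.head_cons, Matrix.cons_val_two, Matrix.tail_cons, Matrix.head_fin_const,
        Matrix.cons_val', Matrix.empty_val', Matrix.cons_val_fin_one, Matrix.of_apply]
      field_simp
      ring
    rw [key, smul_zero]
end

section
/- If m¹ is the centroid of three points x_i¹, x_j¹, x_k¹ in ℝ² and these are the projections (with positive depths d_i, d_j, d_k) of 3D points X_i, X_j, X_k under the canonical camera [I|0], then the ray from the origin (camera center) through the lifted point (m¹, 1) intersects the plane through X_i, X_j, X_k at a point M that is a convex combination of X_i, X_j, X_k with weights proportional to 1/3 · d_l · s, hence M lies in the closed triangle conv{X_i, X_j, X_k}. -/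
set_option maxHeartbeats 1000000 in


/-- The ray from the origin through the lifted centroid of the projections meets the
triangle `conv{Xi, Xj, Xk}`. -/
theorem stmt_10
    (Xi Xj Xk : Fin 3 → ℝ)
    (hdi : 0 < Xi 2) (hdj : 0 < Xj 2) (hdk : 0 < Xk 2)
    (xi xj xk m : Fin 2 → ℝ)
    (hxi : xi = ![Xi 0 / Xi 2, Xi 1 / Xi 2])
    (hxj : xj = ![Xj 0 / Xj 2, Xj 1 / Xj 2])
    (hxk : xk = ![Xk 0 / Xk 2, Xk 1 / Xk 2])
    (hm : m = (1/3 : ℝ) • (xi + xj + xk))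
    (hA : AffineIndependent ℝ ![Xi, Xj, Xk])
    (h0 : (0 : Fin 3 → ℝ) ∉ affineSpan ℝ ({Xi, Xj, Xk} : Set (Fin 3 → ℝ))) :
    ∃ s : ℝ, 0 < s ∧ ∃ a b c : ℝ, 0 ≤ a ∧ 0 ≤ b ∧ 0 ≤ c ∧ a + b + c = 1 ∧
      s • ![m 0, m 1, 1] = a • Xi + b • Xj + c • Xk := by
  obtain ⟨di, hdieq⟩ : ∃ d, Xi 2 = d := ⟨_, rfl⟩
  obtain ⟨dj, hdjeq⟩ : ∃ d, Xj 2 = d := ⟨_, rfl⟩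
  obtain ⟨dk, hdkeq⟩ : ∃ d, Xk 2 = d := ⟨_, rfl⟩
  rw [hdieq] at hdi hxi
  rw [hdjeq] at hdj hxj
  rw [hdkeq] at hdk hxk
  have hD : 0 < 1/di + 1/dj + 1/dk := by positivity
  obtain ⟨D, hDdef⟩ : ∃ D, 1/di + 1/dj + 1/dk = D := ⟨_, rfl⟩
  rw [hDdef] at hD
  have hdi' : di ≠ 0 := ne_of_gt hdi
  have hdj' : dj ≠ 0 := ne_of_gt hdj
  have hdk' : dk ≠ 0 := ne_of_gt hdk
  have hD' : D ≠ 0 := ne_of_gt hD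
  refine ⟨3 / D, by positivity, 1/(di*D), 1/(dj*D), 1/(dk*D),
    by positivity, by positivity, by positivity, ?_, ?_⟩
  · rw [← hDdef]
    field_simp
  · funext l
    subst hxi hxj hxk hm
    have e1 : Xi ⟨2, by norm_num⟩ = di := hdieq
    have e2 : Xj ⟨2, by norm_num⟩ = dj := hdjeq
    have e3 : Xk ⟨2, by norm_num⟩ = dk := hdkeq
    fin_cases l <;>
      simp only [Matrix.cons_val_zero, Matrix.cons_val_one, Matrix.head_cons, Fin.isValue,
        Matrix.cons_val_two, Matrix.tail_cons, Pi.add_apply, Pi.smul_apply, smul_eq_mul,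
        hdieq, hdjeq, hdkeq, e1, e2, e3, Fin.reduceFinMk, Matrix.cons_val] <;>
      rw [← hDdef] <;> field_simp <;> ring
end
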